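/- Let G be a compact Hausdorff topological group with normalized Haar measure, let x₀ ∈ G, and let N be the centralizer of x₀ in G. For continuous F : G×G → ℂ and continuous φ : G → ℂ define (τ(F)φ)(x) := ∫_G F(x x₀ x⁻¹, z) φ(z⁻¹x) dz. Then: (i) τ(F)φ is continuous; (ii) τ(F₁•F₂)φ = τ(F₁)(τ(F₂)φ) for all continuous F₁, F₂ : G×G → ℂ, where (F₁•F₂)(x,y) := ∫_G F₁(x,z) F₂(z⁻¹xz, z⁻¹y) dz; (iii) if χ : N → ℂ is a continuous homomorphism into the unit circle and φ satisfies φ(xn) = χ(n)⁻¹ φ(x) for all x ∈ G, n ∈ N, then τ(F)φ satisfies the same relation. -/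

import Mathlib

open MeasureTheory

/-- The quantum double product on `C(G × G)`:
`(F₁ • F₂)(x, y) = ∫_G F₁(x, z) F₂(z⁻¹xz, z⁻¹y) dz`. -/
noncomputable def qdConv {G : Type*} [Group G] [TopologicalSpace G]
    [MeasurableSpace G] (μ : Measure G) (F₁ F₂ : G × G → ℂ) : G × G → ℂ :=
  fun p => ∫ z, F₁ (p.1, z) * F₂ (z⁻¹ * p.1 * z, z⁻¹ * p.2) ∂μ

/-- The operator `(τ(F)φ)(x) = ∫_G F(x x₀ x⁻¹, z) φ(z⁻¹ x) dz`. -/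
noncomputable def tauOp {G : Type*} [Group G] [TopologicalSpace G]
    [MeasurableSpace G] (μ : Measure G) (x₀ : G) (F : G × G → ℂ) (φ : G → ℂ) :
    G → ℂ :=
  fun x => ∫ z, F (x * x₀ * x⁻¹, z) * φ (z⁻¹ * x) ∂μ

lemma cont_integrable {X E : Type*} [TopologicalSpace X] [CompactSpace X] [MeasurableSpace X]
    [OpensMeasurableSpace X] [NormedAddCommGroup E] {μ : Measure X} [IsFiniteMeasure μ]
    {f : X → E} (hf : Continuous f) : Integrable f μ :=
  hf.integrable_of_hasCompactSupport (isClosed_tsupport f).isCompact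

lemma lip_int {X : Type*} [TopologicalSpace X] [CompactSpace X] [MeasurableSpace X]
    [OpensMeasurableSpace X] {μ : Measure X} [IsProbabilityMeasure μ] :
    LipschitzWith 1 (fun g : C(X, ℂ) => ∫ z, g z ∂μ) := by
  apply LipschitzWith.of_dist_le_mul
  intro g₁ g₂
  rw [NNReal.coe_one, one_mul, dist_eq_norm, ← integral_sub (cont_integrable g₁.continuous)
    (cont_integrable g₂.continuous)]
  calc ‖∫ z, (g₁ z - g₂ z) ∂μ‖ ≤ ∫ z, ‖g₁ z - g₂ z‖ ∂μ := norm_integral_le_integral_norm _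
  _ ≤ ∫ _z, dist g₁ g₂ ∂μ := by
      apply integral_mono (cont_integrable (g₁.continuous.sub g₂.continuous).norm)
        (integrable_const _)
      intro z
      simp only [← dist_eq_norm]
      simpa [dist_eq_norm] using ContinuousMap.dist_apply_le_dist (f := g₁) (g := g₂) z
  _ = dist g₁ g₂ := by simp

lemma tau_cont {G : Type*} [Group G] [TopologicalSpace G] [IsTopologicalGroup G]
    [CompactSpace G] [T2Space G] [MeasurableSpace G] [BorelSpace G]
    (μ : Measure G) [IsProbabilityMeasure μ] (x₀ : G) {F : G × G → ℂ} {φ : G → ℂ}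
    (hF : Continuous F) (hφ : Continuous φ) : Continuous (tauOp μ x₀ F φ) := by
  have hker : Continuous (fun p : G × G => F (p.1 * x₀ * p.1⁻¹, p.2) * φ (p.2⁻¹ * p.1)) := by
    fun_prop
  let f : C(G × G, ℂ) := ⟨_, hker⟩
  exact lip_int.continuous.comp f.curry.continuous

theorem stmt_6 {G : Type*} [Group G] [TopologicalSpace G] [IsTopologicalGroup G]
    [CompactSpace G] [T2Space G] [MeasurableSpace G] [BorelSpace G]
    -- normalized Haar measure:
    (μ : Measure G) [μ.IsHaarMeasure] [IsProbabilityMeasure μ]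
    (x₀ : G) (F F₁ F₂ : G × G → ℂ) (φ : G → ℂ)
    (hF : Continuous F) (hF₁ : Continuous F₁) (hF₂ : Continuous F₂)
    (hφ : Continuous φ) :
    -- (i)
    Continuous (tauOp μ x₀ F φ) ∧
    -- (ii)
    tauOp μ x₀ (qdConv μ F₁ F₂) φ = tauOp μ x₀ F₁ (tauOp μ x₀ F₂ φ) ∧
    -- (iii)
    (∀ χ : Subgroup.centralizer ({x₀} : Set G) → ℂ, Continuous χ →
      (∀ n m, χ (n * m) = χ n * χ m) → (∀ n, ‖χ n‖ = 1) →
      (∀ (x : G) (n : Subgroup.centralizer ({x₀} : Set G)),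
          φ (x * (n : G)) = (χ n)⁻¹ * φ x) →
      ∀ (x : G) (n : Subgroup.centralizer ({x₀} : Set G)),
          tauOp μ x₀ F φ (x * (n : G)) = (χ n)⁻¹ * tauOp μ x₀ F φ x) := by
  refine ⟨tau_cont μ x₀ hF hφ, ?_, ?_⟩
  · -- (ii)
    funext x
    set a := x * x₀ * x⁻¹ with ha
    simp only [tauOp, qdConv]
    have hswap : ∫ z, (∫ w, F₁ (a, w) * F₂ (w⁻¹ * a * w, w⁻¹ * z) ∂μ) * φ (z⁻¹ * x) ∂μ
        = ∫ w, ∫ z, F₁ (a, w) * F₂ (w⁻¹ * a * w, w⁻¹ * z) * φ (z⁻¹ * x) ∂μ ∂μ := by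
      have h1 : ∀ z, (∫ w, F₁ (a, w) * F₂ (w⁻¹ * a * w, w⁻¹ * z) ∂μ) * φ (z⁻¹ * x)
          = ∫ w, F₁ (a, w) * F₂ (w⁻¹ * a * w, w⁻¹ * z) * φ (z⁻¹ * x) ∂μ := fun z =>
        (integral_mul_const _ _).symm
      simp_rw [h1]
      exact integral_integral_swap_of_hasCompactSupport
        (f := fun z w => F₁ (a, w) * F₂ (w⁻¹ * a * w, w⁻¹ * z) * φ (z⁻¹ * x))
        (by fun_prop) (isClosed_tsupport _).isCompact
    rw [hswap]
    congr 1
    funext w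
    calc ∫ z, F₁ (a, w) * F₂ (w⁻¹ * a * w, w⁻¹ * z) * φ (z⁻¹ * x) ∂μ
        = F₁ (a, w) * ∫ z, F₂ (w⁻¹ * a * w, w⁻¹ * z) * φ (z⁻¹ * x) ∂μ := by
          simp_rw [mul_assoc]
          exact integral_const_mul _ _
      _ = F₁ (a, w) * tauOp μ x₀ F₂ φ (w⁻¹ * x) := by
          congr 1
          have h := integral_mul_left_eq_self
            (μ := μ) (fun z => F₂ (w⁻¹ * a * w, w⁻¹ * z) * φ (z⁻¹ * x)) w
          rw [← h]
          simp only [tauOp]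
          congr 1
          funext z
          have e1 : w⁻¹ * (w * z) = z := by group
          have e2 : (w * z)⁻¹ * x = z⁻¹ * (w⁻¹ * x) := by group
          have e3 : w⁻¹ * a * w = w⁻¹ * x * x₀ * (w⁻¹ * x)⁻¹ := by rw [ha]; group
          simp only [e1, e2, e3]
  · -- (iii)
    intro χ hχc hχmul hχnorm hrel x n
    have hn : x₀ * (n : G) = (n : G) * x₀ := n.2 x₀ rfl
    have h1 : x * (n : G) * x₀ * (x * (n : G))⁻¹ = x * x₀ * x⁻¹ := by
      rw [mul_inv_rev, mul_assoc x (n : G) x₀, ← hn]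
      group
    simp only [tauOp, h1]
    have h2 : ∀ z : G, F (x * x₀ * x⁻¹, z) * φ (z⁻¹ * (x * (n : G)))
        = (χ n)⁻¹ * (F (x * x₀ * x⁻¹, z) * φ (z⁻¹ * x)) := by
      intro z
      rw [← mul_assoc z⁻¹ x (n : G), hrel (z⁻¹ * x) n]
      ring
    simp_rw [h2]
    exact integral_const_mul _ _
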